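/- Let p be a prime and u, v, w ∈ ℚₚ³. Then ‖v‖ₚ · ‖u ∧ w‖ₚ ≤ max(‖w‖ₚ · ‖u ∧ v‖ₚ, ‖u‖ₚ · ‖v ∧ w‖ₚ). -/

import Mathlib

/-- The p-adic sup norm of a vector in `ℚₚ³`. -/
noncomputable def pSup {p : ℕ} [Fact p.Prime] (v : Fin 3 → ℚ_[p]) : ℝ := max (max ‖v 0‖ ‖v 1‖) ‖v 2‖

/-- The cross product on `ℚₚ³`. -/
noncomputable def pCross {p : ℕ} [Fact p.Prime] (v w : Fin 3 → ℚ_[p]) : Fin 3 → ℚ_[p] :=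
  ![v 1 * w 2 - v 2 * w 1, v 2 * w 0 - v 0 * w 2, v 0 * w 1 - v 1 * w 0]

lemma norm_le_pSup {p : ℕ} [Fact p.Prime] (v : Fin 3 → ℚ_[p]) (i : Fin 3) :
    ‖v i‖ ≤ pSup v := by
  fin_cases i <;> simp only [pSup]
  · exact le_max_of_le_left (le_max_left _ _)
  · exact le_max_of_le_left (le_max_right _ _)
  · exact le_max_right _ _

lemma pSup_nonneg {p : ℕ} [Fact p.Prime] (v : Fin 3 → ℚ_[p]) : 0 ≤ pSup v :=
  le_trans (norm_nonneg _) (norm_le_pSup v 0)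

lemma padic_add_le {p : ℕ} [Fact p.Prime] {x y : ℚ_[p]} {M : ℝ}
    (hx : ‖x‖ ≤ M) (hy : ‖y‖ ≤ M) : ‖x + y‖ ≤ M :=
  le_trans (Padic.nonarchimedean x y) (max_le hx hy)

lemma padic_sub_le {p : ℕ} [Fact p.Prime] {x y : ℚ_[p]} {M : ℝ}
    (hx : ‖x‖ ≤ M) (hy : ‖y‖ ≤ M) : ‖x - y‖ ≤ M := by
  rw [sub_eq_add_neg]
  exact padic_add_le hx (by simpa using hy)

lemma max_mul_max_le {a0 a1 a2 b0 b1 b2 M : ℝ}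
    (ha0 : 0 ≤ a0) (ha1 : 0 ≤ a1) (ha2 : 0 ≤ a2) (hb : 0 ≤ max (max b0 b1) b2)
    (h : ∀ a ∈ [a0, a1, a2], ∀ b ∈ [b0, b1, b2], a * b ≤ M) :
    max (max a0 a1) a2 * max (max b0 b1) b2 ≤ M := by
  rw [max_mul_of_nonneg _ _ hb, max_mul_of_nonneg _ _ hb]
  rw [mul_max_of_nonneg _ _ ha0, mul_max_of_nonneg _ _ ha0,
      mul_max_of_nonneg _ _ ha1, mul_max_of_nonneg _ _ ha1,
      mul_max_of_nonneg _ _ ha2, mul_max_of_nonneg _ _ ha2]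
  simp only [List.mem_cons, List.not_mem_nil, or_false] at h
  refine max_le (max_le ?_ ?_) ?_ <;> refine max_le (max_le ?_ ?_) ?_ <;>
    apply h <;> tauto

theorem stmt_4 (p : ℕ) [Fact p.Prime] (u v w : Fin 3 → ℚ_[p]) :
    pSup v * pSup (pCross u w) ≤
      max (pSup w * pSup (pCross u v)) (pSup u * pSup (pCross v w)) := by
  set M := max (pSup w * pSup (pCross u v)) (pSup u * pSup (pCross v w)) with hM
  have hA : ∀ i j : Fin 3, ‖w i * pCross u v j‖ ≤ M := by
    intro i j
    rw [norm_mul]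
    calc ‖w i‖ * ‖pCross u v j‖ ≤ pSup w * pSup (pCross u v) :=
          mul_le_mul (norm_le_pSup w i) (norm_le_pSup _ j) (norm_nonneg _) (pSup_nonneg w)
      _ ≤ M := le_max_left _ _
  have hB : ∀ i j : Fin 3, ‖u i * pCross v w j‖ ≤ M := by
    intro i j
    rw [norm_mul]
    calc ‖u i‖ * ‖pCross v w j‖ ≤ pSup u * pSup (pCross v w) :=
          mul_le_mul (norm_le_pSup u i) (norm_le_pSup _ j) (norm_nonneg _) (pSup_nonneg u)
      _ ≤ M := le_max_right _ _
  have key : ∀ i j : Fin 3, ‖v i‖ * ‖pCross u w j‖ ≤ M := by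
    intro i j
    rw [← norm_mul]
    fin_cases i <;> fin_cases j
    · have h : v 0 * pCross u w 0 =
          w 0 * pCross u v 0 - u 1 * pCross v w 1 - u 2 * pCross v w 2 := by
        simp only [pCross]; norm_num [Matrix.cons_val_zero, Matrix.cons_val_one, Matrix.cons_val_two]; ring
      show ‖v 0 * pCross u w 0‖ ≤ M
      rw [h]; exact padic_sub_le (padic_sub_le (hA 0 0) (hB 1 1)) (hB 2 2)
    · have h : v 0 * pCross u w 1 = u 0 * pCross v w 1 + w 0 * pCross u v 1 := by
        simp only [pCross]; norm_num; ring
      show ‖v 0 * pCross u w 1‖ ≤ M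
      rw [h]; exact padic_add_le (hB 0 1) (hA 0 1)
    · have h : v 0 * pCross u w 2 = u 0 * pCross v w 2 + w 0 * pCross u v 2 := by
        simp only [pCross]; norm_num [Matrix.cons_val_two]; ring
      show ‖v 0 * pCross u w 2‖ ≤ M
      rw [h]; exact padic_add_le (hB 0 2) (hA 0 2)
    · have h : v 1 * pCross u w 0 = u 1 * pCross v w 0 + w 1 * pCross u v 0 := by
        simp only [pCross]; norm_num; ring
      show ‖v 1 * pCross u w 0‖ ≤ M
      rw [h]; exact padic_add_le (hB 1 0) (hA 1 0)
    · have h : v 1 * pCross u w 1 =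
          w 1 * pCross u v 1 - u 0 * pCross v w 0 - u 2 * pCross v w 2 := by
        simp only [pCross]; norm_num [Matrix.cons_val_two]; ring
      show ‖v 1 * pCross u w 1‖ ≤ M
      rw [h]; exact padic_sub_le (padic_sub_le (hA 1 1) (hB 0 0)) (hB 2 2)
    · have h : v 1 * pCross u w 2 = u 1 * pCross v w 2 + w 1 * pCross u v 2 := by
        simp only [pCross]; norm_num [Matrix.cons_val_two]; ring
      show ‖v 1 * pCross u w 2‖ ≤ M
      rw [h]; exact padic_add_le (hB 1 2) (hA 1 2)
    · have h : v 2 * pCross u w 0 = u 2 * pCross v w 0 + w 2 * pCross u v 0 := by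
        simp only [pCross]; norm_num; ring
      show ‖v 2 * pCross u w 0‖ ≤ M
      rw [h]; exact padic_add_le (hB 2 0) (hA 2 0)
    · have h : v 2 * pCross u w 1 = u 2 * pCross v w 1 + w 2 * pCross u v 1 := by
        simp only [pCross]; norm_num; ring
      show ‖v 2 * pCross u w 1‖ ≤ M
      rw [h]; exact padic_add_le (hB 2 1) (hA 2 1)
    · have h : v 2 * pCross u w 2 =
          w 2 * pCross u v 2 - u 0 * pCross v w 0 - u 1 * pCross v w 1 := by
        simp only [pCross]; norm_num [Matrix.cons_val_two]; ring
      show ‖v 2 * pCross u w 2‖ ≤ M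
      rw [h]; exact padic_sub_le (padic_sub_le (hA 2 2) (hB 0 0)) (hB 1 1)
  show pSup v * pSup (pCross u w) ≤ M
  unfold pSup
  apply max_mul_max_le (norm_nonneg _) (norm_nonneg _) (norm_nonneg _)
    (le_trans (norm_nonneg _) (le_max_of_le_left (le_max_left _ _)))
  simp only [List.mem_cons, List.not_mem_nil, or_false]
  rintro a (rfl|rfl|rfl) b (rfl|rfl|rfl)
  exacts [key 0 0, key 0 1, key 0 2, key 1 0, key 1 1, key 1 2, key 2 0, key 2 1, key 2 2]
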